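/- Let x_1,...,x_d be vectors in a Hilbert space with positive definite Gram matrix. Fix j and S ⊆ [d]\{j}, let m(S) be the minimal element of the neighborhood lattice T_j(S) = {T ⊆ [d]\{j} : P_T P_j = P_S P_j} (which exists since T_j(S) is closed under intersections). Then for any T ⊆ [d]\{j}: T ∈ T_j(S) if and only if m(S) ⊆ T and P_T (I − P_{m(S)}) P_j = 0. -/

import Mathlib

theorem stmt_8 {H : Type*} [NormedAddCommGroup H] [InnerProductSpace ℝ H] [CompleteSpace H]
    {d : ℕ} (x : Fin d → H)
    (hGram : (Matrix.of fun (i j : Fin d) => (inner ℝ (x i) (x j) : ℝ)).PosDef)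
    (P : Finset (Fin d) → H →L[ℝ] H)
    (hsa : ∀ A, IsSelfAdjoint (P A))
    (hidem : ∀ A, P A * P A = P A)
    (hrange : ∀ A : Finset (Fin d), LinearMap.range (P A : H →ₗ[ℝ] H) = Submodule.span ℝ (x '' ↑A))
    (j : Fin d) (S : Finset (Fin d)) (hS : j ∉ S)
    (m : Finset (Fin d)) (hmj : j ∉ m)
    (hm_mem : P m * P {j} = P S * P {j})
    (hm_min : ∀ T : Finset (Fin d), j ∉ T → P T * P {j} = P S * P {j} → m ⊆ T)
    (T : Finset (Fin d)) (hT : j ∉ T) :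
    P T * P {j} = P S * P {j} ↔ m ⊆ T ∧ P T * (1 - P m) * P {j} = 0 := by
  have hfix : ∀ (A : Finset (Fin d)) (v : H), v ∈ LinearMap.range (P A : H →ₗ[ℝ] H) → P A v = v := by
    intro A v hv
    obtain ⟨w, rfl⟩ := hv
    have := congrFun (congrArg DFunLike.coe (hidem A)) w
    simpa using this
  have habs : ∀ {A B : Finset (Fin d)}, A ⊆ B → P B * P A = P A := by
    intro A B hAB
    ext y
    simp only [ContinuousLinearMap.mul_apply]
    apply hfix
    rw [hrange]
    have h1 : P A y ∈ Submodule.span ℝ (x '' ↑A) := by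
      rw [← hrange]; exact LinearMap.mem_range_self _ y
    exact Submodule.span_mono (Set.image_mono (f := x) (by exact_mod_cast hAB)) h1
  have key : P T * (1 - P m) * P {j} = P T * P {j} - (P T * P m) * P {j} := by noncomm_ring
  constructor
  · intro h
    have hmT : m ⊆ T := hm_min T hT h
    refine ⟨hmT, ?_⟩
    rw [key, habs hmT, h, hm_mem, sub_self]
  · rintro ⟨hmT, h0⟩
    rw [key, habs hmT, hm_mem] at h0
    exact sub_eq_zero.mp h0
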